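/- For all real numbers ε > 0 and Δt > 0, one has |(2/Δt)·(e^{-Δt/ε²} - 1)/(e^{-Δt/ε²} + 1) + 1/ε²| ≤ Δt²/(12·ε⁶). -/

import Mathlib

open Real

private lemma aux_exp_quartic {x : ℝ} (hx : 0 ≤ x) :
    1 + 2*x + 2*x^2 + 4/3*x^3 + 2/3*x^4 ≤ Real.exp (2*x) := by
  have h := Real.sum_le_exp_of_nonneg (by linarith : (0:ℝ) ≤ 2*x) 5
  norm_num [Finset.sum_range_succ, Nat.factorial] at h
  nlinarith [h]

private lemma aux_L1 {u : ℝ} (hu : 0 ≤ u) :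
    Real.exp (2*u) - 1 ≤ u * (Real.exp (2*u) + 1) := by
  set g : ℝ → ℝ := fun x => x * Real.exp (2*x) + x - Real.exp (2*x) + 1 with hg
  have hd : ∀ x : ℝ, HasDerivAt g (Real.exp (2*x)*(2*x-1) + 1) x := by
    intro x
    have he : HasDerivAt (fun x : ℝ => Real.exp (2*x)) (Real.exp (2*x) * (2*1)) x :=
      ((hasDerivAt_id x).const_mul 2).exp
    have h1 : HasDerivAt (fun x : ℝ => x * Real.exp (2*x))
        (1 * Real.exp (2*x) + x * (Real.exp (2*x) * (2*1))) x := (hasDerivAt_id x).mul he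
    have := ((h1.add (hasDerivAt_id x)).sub he).add_const 1
    refine this.congr_deriv ?_
    ring
  have hd' : ∀ x : ℝ, 0 ≤ Real.exp (2*x)*(2*x-1) + 1 := by
    intro x
    have h1 : -(2*x) + 1 ≤ Real.exp (-(2*x)) := Real.add_one_le_exp _
    have h2 : Real.exp (2*x) * Real.exp (-(2*x)) = 1 := by
      rw [← Real.exp_add]; simp
    nlinarith [Real.exp_pos (2*x), mul_le_mul_of_nonneg_left h1 (Real.exp_pos (2*x)).le]
  have hmono : Monotone g :=
    monotone_of_deriv_nonneg (fun x => (hd x).differentiableAt)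
      (fun x => by rw [(hd x).deriv]; exact hd' x)
  have := hmono hu
  simp only [hg] at this
  norm_num at this
  nlinarith [this]

private lemma aux_L2 {u : ℝ} (hu : 0 ≤ u) :
    (u - u^3/3) * (Real.exp (2*u) + 1) ≤ Real.exp (2*u) - 1 := by
  set f : ℝ → ℝ := fun x => Real.exp (2*x) * (1 - x + x^3/3) - (1 + x - x^3/3) with hf
  have hd : ∀ x : ℝ, HasDerivAt f
      (Real.exp (2*x) * (1 - 2*x + x^2 + 2*x^3/3) - (1 - x^2)) x := by
    intro x
    have he : HasDerivAt (fun x : ℝ => Real.exp (2*x)) (Real.exp (2*x) * (2*1)) x :=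
      ((hasDerivAt_id x).const_mul 2).exp
    have hp : HasDerivAt (fun x : ℝ => 1 - x + x^3/3) (0 - 1 + (3:ℕ)*x^2/3) x := by
      exact (((hasDerivAt_const x (1:ℝ)).sub (hasDerivAt_id x)).add
        ((hasDerivAt_pow 3 x).div_const 3))
    have hq : HasDerivAt (fun x : ℝ => 1 + x - x^3/3) (0 + 1 - (3:ℕ)*x^2/3) x := by
      exact (((hasDerivAt_const x (1:ℝ)).add (hasDerivAt_id x)).sub
        ((hasDerivAt_pow 3 x).div_const 3))
    have := (he.mul hp).sub hq
    refine this.congr_deriv ?_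
    push_cast
    ring
  have hmono : MonotoneOn f (Set.Ici (0:ℝ)) := by
    apply monotoneOn_of_deriv_nonneg (convex_Ici 0)
      (fun x _ => (hd x).differentiableAt.continuousAt.continuousWithinAt)
      (fun x _ => ((hd x).differentiableAt).differentiableWithinAt)
    intro x hx
    rw [interior_Ici] at hx
    rw [(hd x).deriv]
    have hx0 : (0:ℝ) ≤ x := le_of_lt hx
    have hP := aux_exp_quartic hx0
    have hqn : (0:ℝ) ≤ 1 - 2*x + x^2 + 2*x^3/3 := by
      nlinarith [sq_nonneg (1-x), pow_nonneg hx0 3]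
    have := mul_le_mul_of_nonneg_right hP hqn
    nlinarith [pow_nonneg hx0 4, pow_nonneg hx0 5, pow_nonneg hx0 6, pow_nonneg hx0 7]
  have := hmono (Set.self_mem_Ici) (Set.mem_Ici.mpr hu) hu
  simp only [hf] at this
  norm_num at this
  nlinarith [this]

theorem stmt_6 (ε Δt : ℝ) (hε : 0 < ε) (hΔt : 0 < Δt) :
    |(2 / Δt) * ((Real.exp (-Δt / ε ^ 2) - 1) / (Real.exp (-Δt / ε ^ 2) + 1)) + 1 / ε ^ 2|
      ≤ Δt ^ 2 / (12 * ε ^ 6) := by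
  set u : ℝ := Δt / (2 * ε ^ 2) with hu_def
  have hu : 0 ≤ u := by positivity
  have harg : -Δt / ε ^ 2 = -(2*u) := by
    rw [hu_def]; field_simp
  set X : ℝ := Real.exp (2*u) with hX
  have hXpos : 0 < X := Real.exp_pos _
  have hX1 : 0 < 1 + X := by linarith
  have hfr : (Real.exp (-Δt / ε ^ 2) - 1) / (Real.exp (-Δt / ε ^ 2) + 1)
      = (1 - X) / (1 + X) := by
    rw [harg, Real.exp_neg, ← hX]
    rw [div_eq_div_iff (by positivity) hX1.ne']
    field_simp
    try ring
  rw [hfr]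
  have hL1 := aux_L1 hu
  have hL2 := aux_L2 hu
  rw [← hX] at hL1 hL2
  have h1 : -u ≤ (1 - X) / (1 + X) := by
    rw [le_div_iff₀ hX1]; nlinarith
  have h2 : (1 - X) / (1 + X) ≤ -u + u^3/3 := by
    rw [div_le_iff₀ hX1]; nlinarith
  have hc : 0 < 2 / Δt := by positivity
  have e1 : (2/Δt) * u = 1/ε^2 := by
    rw [hu_def]; field_simp; try ring
  have e2 : (2/Δt) * (u^3/3) = Δt^2/(12*ε^6) := by
    rw [hu_def]; field_simp; try ring
  rw [abs_le]
  constructor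
  · have := mul_le_mul_of_nonneg_left h1 hc.le
    have hR : (0:ℝ) ≤ Δt^2/(12*ε^6) := by positivity
    nlinarith
  · have := mul_le_mul_of_nonneg_left h2 hc.le
    nlinarith
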